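/- Nonnegativity criterion from an H¹₀-error bound (Theorem 1, Lipschitz formulation): Let N ≥ 1, let Ω ⊆ ℝ^N be a bounded open set, and let λ₁ > 0 and 0 ≤ λ < λ₁ be reals. Let n ≥ 1, and for each i ∈ {1,…,n} let aᵢ ≥ 0, pᵢ > 1 and Cᵢ > 0 be reals. Let f : ℝ → ℝ be continuous with −f(−t) ≤ λt + Σ_{i=1}^n aᵢ t^{pᵢ} for all t ≥ 0. Assume: (Poincaré inequality) λ₁ ∫ v(x)² dx ≤ ∫ ‖fderiv ℝ v x‖² dx for every Lipschitz test function v on Ω; (Sobolev embedding) for each i, (∫ |v(x)|^{pᵢ+1} dx)^{1/(pᵢ+1)} ≤ Cᵢ (∫ ‖fderiv ℝ v x‖² dx)^{1/2} for every Lipschitz test function v on Ω. Let û and u be Lipschitz test functions on Ω such that u is a weak solution of −Δu = f(u), i.e., ∫ ⟨∇u(x), ∇v(x)⟩ dx = ∫ f(u(x)) v(x) dx for every Lipschitz test function v on Ω. Let ρ ≥ 0 satisfy ∫ ‖fderiv ℝ (u − û) x‖² dx ≤ ρ². If Σ_{i=1}^n aᵢ Cᵢ² ( (∫ (û_-(x))^{pᵢ+1}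 dx)^{1/(pᵢ+1)} + Cᵢ ρ )^{pᵢ−1} < 1 − λ/λ₁, then u(x) ≥ 0 for all x ∈ ℝ^N. -/

import Mathlib

open MeasureTheory Real Set
open scoped RealInnerProductSpace

/-- A Lipschitz test function on an open set `Ω ⊆ ℝ^N`: a Lipschitz function
vanishing outside `Ω`. -/
def IsLipTest {N : ℕ} (Ω : Set (EuclideanSpace ℝ (Fin N)))
    (v : EuclideanSpace ℝ (Fin N) → ℝ) : Prop :=
  (∃ K, LipschitzWith K v) ∧ ∀ x, x ∉ Ω → v x = 0

noncomputable section Helpers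
open Filter
variable {N : ℕ}
local notation "EE" => EuclideanSpace ℝ (Fin N)

private lemma testIntegrable {Ω : Set EE} (hΩb : Bornology.IsBounded Ω) {v : EE → ℝ}
    (hvc : Continuous v) (hv0 : ∀ x ∉ Ω, v x = 0) :
    Integrable v := by
  have hsupp : Function.support v ⊆ Ω := fun x hx => by
    by_contra h; exact hx (hv0 x h)
  have hcs : HasCompactSupport v :=
    IsCompact.of_isClosed_subset hΩb.isCompact_closure isClosed_closure
      (closure_mono hsupp)
  exact hvc.integrable_of_hasCompactSupport hcs

private lemma fderiv_out {Ω : Set EE} {v : EE → ℝ} (hv0 : ∀ x ∉ Ω, v x = 0)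
    {x : EE} (hx : x ∉ closure Ω) : fderiv ℝ v x = 0 := by
  have hev : v =ᶠ[nhds x] (fun _ => (0:ℝ)) := by
    filter_upwards [isClosed_closure.isOpen_compl.mem_nhds hx] with y hy
    exact hv0 y (fun h => hy (subset_closure h))
  rw [hev.fderiv_eq, fderiv_const_apply]

private lemma fderivSqIntegrable {Ω : Set EE} (hΩb : Bornology.IsBounded Ω)
    {v : EE → ℝ} {K : NNReal} (hK : LipschitzWith K v) (hv0 : ∀ x ∉ Ω, v x = 0) :
    Integrable (fun x => ‖fderiv ℝ v x‖ ^ 2) := by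
  have hmeas : AEStronglyMeasurable (fun x => ‖fderiv ℝ v x‖ ^ 2) volume :=
    (((measurable_fderiv ℝ v).norm).pow_const 2).aestronglyMeasurable
  have hKsq : Integrable ((closure Ω).indicator fun _ => (K:ℝ)^2) :=
    (integrable_indicator_iff measurableSet_closure).2
      (integrableOn_const hΩb.isCompact_closure.measure_lt_top.ne)
  refine hKsq.mono' hmeas (Filter.Eventually.of_forall fun x => ?_)
  by_cases hx : x ∈ closure Ω
  · rw [Set.indicator_of_mem hx, Real.norm_eq_abs, abs_of_nonneg (by positivity)]
    exact pow_le_pow_left₀ (norm_nonneg _) (norm_fderiv_le_of_lipschitz ℝ hK) 2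
  · rw [Set.indicator_of_notMem hx, fderiv_out hv0 hx]
    simp

private lemma ae_fderiv_negpart {u : EE → ℝ} {K : NNReal} (hK : LipschitzWith K u)
    {ε : ℝ} (hnull : volume {x : EE | u x = -ε} = 0) :
    ∀ᵐ x : EE, (u x < -ε ∧ fderiv ℝ (fun y => max (-u y - ε) 0) x = -fderiv ℝ u x)
      ∨ (¬ u x < -ε ∧ fderiv ℝ (fun y => max (-u y - ε) 0) x = 0) := by
  have hcu : Continuous u := hK.continuous
  have hne : ∀ᵐ x : EE, u x ≠ -ε := by
    rw [MeasureTheory.ae_iff]; simpa using hnull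
  filter_upwards [hK.ae_differentiableAt (μ := volume), hne] with x hd hne
  rcases lt_or_gt_of_ne hne with hlt | hgt
  · left; refine ⟨hlt, ?_⟩
    have hev : (fun y => max (-u y - ε) 0) =ᶠ[nhds x] (fun y => -u y - ε) := by
      filter_upwards [(isOpen_lt hcu continuous_const).mem_nhds hlt] with y hy
      exact max_eq_left (by have : u y < -ε := hy; linarith)
    rw [hev.fderiv_eq, fderiv_sub_const, fderiv_fun_neg]
  · right; refine ⟨not_lt.2 hgt.le, ?_⟩
    have hev : (fun y => max (-u y - ε) 0) =ᶠ[nhds x] (fun _ => (0:ℝ)) := by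
      filter_upwards [(isOpen_lt continuous_const hcu).mem_nhds hgt] with y hy
      exact max_eq_right (by have : -ε < u y := hy; linarith)
    rw [hev.fderiv_eq, fderiv_const_apply]

end Helpers

set_option maxHeartbeats 2000000 in
/-- Nonnegativity criterion from an `H¹₀`-error bound (Theorem 1, Lipschitz
formulation). -/
theorem nonneg_of_H10_error_bound
    {N : ℕ} (hN : 1 ≤ N)
    (Ω : Set (EuclideanSpace ℝ (Fin N))) (hΩo : IsOpen Ω)
    (hΩb : Bornology.IsBounded Ω)
    (lam₁ lam : ℝ) (hlam₁ : 0 < lam₁) (hlam0 : 0 ≤ lam) (hlam : lam < lam₁)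
    (n : ℕ) (hn : 1 ≤ n) (a p C : ℕ → ℝ)
    (ha : ∀ i ∈ Finset.Icc 1 n, 0 ≤ a i)
    (hp : ∀ i ∈ Finset.Icc 1 n, 1 < p i)
    (hC : ∀ i ∈ Finset.Icc 1 n, 0 < C i)
    (f : ℝ → ℝ) (hf : Continuous f)
    (hfb : ∀ t : ℝ, 0 ≤ t →
      -f (-t) ≤ lam * t + ∑ i ∈ Finset.Icc 1 n, a i * t ^ (p i))
    (hPoincare : ∀ v, IsLipTest Ω v →
      lam₁ * ∫ x, (v x) ^ 2 ≤ ∫ x, ‖fderiv ℝ v x‖ ^ 2)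
    (hSobolev : ∀ i ∈ Finset.Icc 1 n, ∀ v, IsLipTest Ω v →
      (∫ x, |v x| ^ (p i + 1)) ^ (1 / (p i + 1)) ≤
        C i * (∫ x, ‖fderiv ℝ v x‖ ^ 2) ^ ((1 : ℝ) / 2))
    (uhat u : EuclideanSpace ℝ (Fin N) → ℝ)
    (huhat : IsLipTest Ω uhat) (hu : IsLipTest Ω u)
    (hweak : ∀ v, IsLipTest Ω v →
      ∫ x, ⟪gradient u x, gradient v x⟫ = ∫ x, f (u x) * v x)
    (ρ : ℝ) (hρ : 0 ≤ ρ)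
    (herr : ∫ x, ‖fderiv ℝ (u - uhat) x‖ ^ 2 ≤ ρ ^ 2)
    (hcond : ∑ i ∈ Finset.Icc 1 n,
        a i * C i ^ 2 *
          ((∫ x, (max (-uhat x) 0) ^ (p i + 1)) ^ (1 / (p i + 1)) + C i * ρ)
            ^ (p i - 1)
        < 1 - lam / lam₁) :
    ∀ x, 0 ≤ u x := by
  classical
  obtain ⟨⟨Ku, hKu⟩, hu0⟩ := hu
  obtain ⟨⟨Kh, hKh⟩, huhat0⟩ := huhat
  have hcu : Continuous u := hKu.continuous
  set w : EuclideanSpace ℝ (Fin N) → ℝ := fun x => max (-u x) 0 with hw_def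
  have hw_nonneg : ∀ x, 0 ≤ w x := fun x => le_max_right _ _
  have hcw : Continuous w := (hcu.neg).max continuous_const
  have hw0 : ∀ x ∉ Ω, w x = 0 := fun x hx => by
    simp [hw_def, hu0 x hx]
  -- Step 1: choose a sequence εₖ → 0 avoiding positive-measure level sets.
  have hseq : ∀ k : ℕ, ∃ t : ℝ, 0 < t ∧ t < 1/(k+1) ∧
      volume {x : EuclideanSpace ℝ (Fin N) | u x = -t} = 0 := by
    intro k
    have hcnt : {t : ℝ | 0 < volume {x : EuclideanSpace ℝ (Fin N) | u x = -t}}.Countable := by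
      apply MeasureTheory.Measure.countable_meas_pos_of_disjoint_iUnion
        (As := fun t : ℝ => {x : EuclideanSpace ℝ (Fin N) | u x = -t})
      · exact fun t => hcu.measurable (measurableSet_singleton (-t))
      · intro s t hst
        refine Set.disjoint_left.2 fun x hxs hxt => hst ?_
        have h1 : u x = -s := hxs
        have h2 : u x = -t := hxt
        have : -s = -t := h1 ▸ h2
        linarith [neg_injective this]
    by_contra hcon
    push_neg at hcon
    have hsub : Set.Ioo (0:ℝ) (1/(k+1)) ⊆
        {t : ℝ | 0 < volume {x : EuclideanSpace ℝ (Fin N) | u x = -t}} := by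
      intro t ht
      have := hcon t ht.1 ht.2
      exact pos_iff_ne_zero.2 this
    have h1 : volume (Set.Ioo (0:ℝ) (1/(k+1))) = 0 :=
      measure_mono_null hsub (hcnt.measure_zero volume)
    rw [Real.volume_Ioo] at h1
    have hpos : (0:ℝ) < 1/(k+1) := by positivity
    simp only [ENNReal.ofReal_eq_zero, sub_zero] at h1
    linarith
  choose ε hε0 hεlt hεnull using hseq
  have hεto : Filter.Tendsto ε Filter.atTop (nhds 0) := by
    have h0 : Filter.Tendsto (fun _ : ℕ => (0:ℝ)) Filter.atTop (nhds 0) := tendsto_const_nhds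
    refine tendsto_of_tendsto_of_tendsto_of_le_of_le h0
      tendsto_one_div_add_atTop_nhds_zero_nat (fun k => (hε0 k).le) (fun k => (hεlt k).le)
  -- the smoothed negative parts
  set W : ℕ → EuclideanSpace ℝ (Fin N) → ℝ :=
    fun k x => max (-u x - ε k) 0 with hW_def
  have hWtest : ∀ k, IsLipTest Ω (W k) := by
    intro k
    constructor
    · exact ⟨Ku + 0, (hKu.neg.sub (LipschitzWith.const' (ε k))).max_const 0⟩
    · intro x hx
      have : u x = 0 := hu0 x hx
      simp only [hW_def, this, neg_zero, zero_sub]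
      exact max_eq_right (by linarith [hε0 k])
  have hW_nonneg : ∀ k x, 0 ≤ W k x := fun k x => le_max_right _ _
  have hW_le_w : ∀ k x, W k x ≤ w x := fun k x =>
    max_le_max (by have := (hε0 k).le; linarith) le_rfl
  have hW_tendsto : ∀ x, Filter.Tendsto (fun k => W k x) Filter.atTop (nhds (w x)) := by
    intro x
    have hc : Continuous (fun t : ℝ => max (-u x - t) 0) :=
      (continuous_const.sub continuous_id).max continuous_const
    have := (hc.continuousAt (x := (0:ℝ))).tendsto.comp hεto
    simp only [sub_zero] at this
    exact this
  -- gradient identities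
  set G : EuclideanSpace ℝ (Fin N) → ℝ := fun x => ‖fderiv ℝ u x‖ ^ 2 with hG_def
  have hGint : Integrable G := fderivSqIntegrable hΩb hKu hu0
  have hG_nonneg : ∀ x, 0 ≤ G x := fun x => by positivity
  set Ebig : ℝ := ∫ x, Set.indicator {y | u y < 0} G x with hE_def
  set F : ℕ → ℝ := fun k => ∫ x, Set.indicator {y | u y < -(ε k)} G x with hF_def
  have hmeas_lt : ∀ c : ℝ, MeasurableSet {y : EuclideanSpace ℝ (Fin N) | u y < c} :=
    fun c => measurableSet_lt hcu.measurable measurable_const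
  have hFint : ∀ k, Integrable (fun x => Set.indicator {y | u y < -(ε k)} G x) :=
    fun k => hGint.indicator (hmeas_lt _)
  have hEint : Integrable (fun x => Set.indicator {y | u y < 0} G x) :=
    hGint.indicator (hmeas_lt _)
  have hE0 : 0 ≤ Ebig := integral_nonneg fun x =>
    Set.indicator_nonneg (fun y _ => hG_nonneg y) x
  have hF0 : ∀ k, 0 ≤ F k := fun k => integral_nonneg fun x =>
    Set.indicator_nonneg (fun y _ => hG_nonneg y) x
  have hFE : ∀ k, F k ≤ Ebig := by
    intro k
    refine integral_mono (hFint k) hEint ?_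
    refine Set.indicator_le_indicator_of_subset ?_ (fun y => hG_nonneg y)
    intro x hx
    have h1 : u x < -(ε k) := hx
    have h2 := hε0 k
    show u x < 0
    linarith
  -- a.e. dichotomy for each k
  have hae : ∀ k, ∀ᵐ x : EuclideanSpace ℝ (Fin N),
      (u x < -(ε k) ∧ fderiv ℝ (W k) x = -fderiv ℝ u x)
      ∨ (¬ u x < -(ε k) ∧ fderiv ℝ (W k) x = 0) := fun k =>
    ae_fderiv_negpart hKu (hεnull k)
  have hWgrad : ∀ k, ∫ x, ‖fderiv ℝ (W k) x‖ ^ 2 = F k := by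
    intro k
    refine integral_congr_ae ?_
    filter_upwards [hae k] with x hx
    rcases hx with ⟨hlt, heq⟩ | ⟨hnlt, heq⟩
    · rw [heq, norm_neg,
        Set.indicator_of_mem (show x ∈ {y | u y < -ε k} from hlt) G]
    · rw [heq, Set.indicator_of_notMem (show x ∉ {y | u y < -ε k} from hnlt) G]
      simp
  have hWinner : ∀ k, ∫ x, ⟪gradient u x, gradient (W k) x⟫ = -(F k) := by
    intro k
    have hps : ∀ᵐ x : EuclideanSpace ℝ (Fin N),
        ⟪gradient u x, gradient (W k) x⟫ = -(Set.indicator {y | u y < -(ε k)} G x) := by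
      filter_upwards [hae k] with x hx
      rcases hx with ⟨hlt, heq⟩ | ⟨hnlt, heq⟩
      · have hg : gradient (W k) x = -gradient u x := by
          show (InnerProductSpace.toDual ℝ _).symm (fderiv ℝ (W k) x) = _
          rw [heq, map_neg]; rfl
        have hnorm : ‖gradient u x‖ = ‖fderiv ℝ u x‖ :=
          LinearIsometryEquiv.norm_map (InnerProductSpace.toDual ℝ _).symm _
        rw [hg, inner_neg_right, real_inner_self_eq_norm_sq, hnorm,
          Set.indicator_of_mem (show x ∈ {y | u y < -ε k} from hlt) G]
      · have hg : gradient (W k) x = 0 := by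
          show (InnerProductSpace.toDual ℝ _).symm (fderiv ℝ (W k) x) = 0
          rw [heq]; exact map_zero _
        rw [hg, inner_zero_right,
          Set.indicator_of_notMem (show x ∉ {y | u y < -ε k} from hnlt) G, neg_zero]
    rw [integral_congr_ae hps, integral_neg]
  -- limits
  have hFtend : Filter.Tendsto F Filter.atTop (nhds Ebig) := by
    refine MeasureTheory.tendsto_integral_of_dominated_convergence G
      (fun k => (hFint k).aestronglyMeasurable) hGint ?_ ?_
    · intro k
      refine Filter.Eventually.of_forall fun x => ?_
      rw [Real.norm_eq_abs, abs_of_nonneg (Set.indicator_nonneg (fun y _ => hG_nonneg y) x)]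
      exact Set.indicator_le_self' (fun y _ => hG_nonneg y) x
    · refine Filter.Eventually.of_forall fun x => ?_
      by_cases hux : u x < 0
      · have hev : ∀ᶠ k in Filter.atTop, ε k < -u x :=
          hεto.eventually_lt_const (by linarith)
        rw [Set.indicator_of_mem (show x ∈ {y | u y < 0} from hux) G]
        refine Filter.Tendsto.congr' ?_ (tendsto_const_nhds (x := G x))
        filter_upwards [hev] with k hk
        exact (Set.indicator_of_mem (show x ∈ {y | u y < -ε k} from by
          show u x < -ε k; linarith) G).symm
      · have hz : ∀ k, Set.indicator {y | u y < -(ε k)} G x = 0 := fun k =>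
          Set.indicator_of_notMem (show x ∉ {y | u y < -ε k} from fun h => hux (by
            have h1 : u x < -(ε k) := h
            have h2 := hε0 k
            show u x < 0
            linarith)) G
        rw [Set.indicator_of_notMem (show x ∉ {y | u y < 0} from hux) G]
        simpa [hz] using tendsto_const_nhds (x := (0:ℝ))
  have hweak_lim : Ebig = ∫ x, -(f (u x) * w x) := by
    have hWcont : ∀ k, Continuous (W k) := fun k =>
      (hcu.neg.sub continuous_const).max continuous_const
    have hbint : Integrable (fun x => |f (u x)| * w x) :=
      testIntegrable hΩb (((hf.comp hcu).abs).mul hcw)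
        (fun x hx => by rw [hw0 x hx, mul_zero])
    have hR : Filter.Tendsto (fun k => ∫ x, f (u x) * W k x) Filter.atTop
        (nhds (∫ x, f (u x) * w x)) := by
      refine MeasureTheory.tendsto_integral_of_dominated_convergence
        (fun x => |f (u x)| * w x)
        (fun k => ((hf.comp hcu).mul (hWcont k)).aestronglyMeasurable) hbint ?_ ?_
      · intro k
        refine Filter.Eventually.of_forall fun x => ?_
        rw [Real.norm_eq_abs, abs_mul]
        exact mul_le_mul_of_nonneg_left
          (by rw [abs_of_nonneg (hW_nonneg k x)]; exact hW_le_w k x) (abs_nonneg _)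
      · exact Filter.Eventually.of_forall fun x => (hW_tendsto x).const_mul _
    have hL : Filter.Tendsto (fun k => -(F k)) Filter.atTop (nhds (-Ebig)) := hFtend.neg
    have heqk : ∀ k, -(F k) = ∫ x, f (u x) * W k x := fun k =>
      (hWinner k).symm.trans (hweak (W k) (hWtest k))
    have huni : -Ebig = ∫ x, f (u x) * w x :=
      tendsto_nhds_unique (hL.congr heqk) hR
    rw [integral_neg, ← huni, neg_neg]
  have hPoin_lim : lam₁ * ∫ x, (w x) ^ 2 ≤ Ebig := by
    have hWcont : ∀ k, Continuous (W k) := fun k =>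
      (hcu.neg.sub continuous_const).max continuous_const
    have hbint : Integrable (fun x => (w x) ^ 2) :=
      testIntegrable hΩb (hcw.pow 2) (fun x hx => by rw [hw0 x hx]; ring)
    have hWsq : Filter.Tendsto (fun k => ∫ x, (W k x) ^ 2) Filter.atTop
        (nhds (∫ x, (w x) ^ 2)) := by
      refine MeasureTheory.tendsto_integral_of_dominated_convergence
        (fun x => (w x) ^ 2)
        (fun k => ((hWcont k).pow 2).aestronglyMeasurable) hbint ?_ ?_
      · intro k
        refine Filter.Eventually.of_forall fun x => ?_
        rw [Real.norm_eq_abs, abs_of_nonneg (by positivity)]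
        exact pow_le_pow_left₀ (hW_nonneg k x) (hW_le_w k x) 2
      · exact Filter.Eventually.of_forall fun x => (hW_tendsto x).pow 2
    refine le_of_tendsto (hWsq.const_mul lam₁) (Filter.Eventually.of_forall fun k => ?_)
    refine (hPoincare _ (hWtest k)).trans ?_
    rw [hWgrad k]
    exact hFE k
  have hSob_lim : ∀ i ∈ Finset.Icc 1 n,
      (∫ x, (w x) ^ (p i + 1)) ^ (1 / (p i + 1)) ≤ C i * Ebig ^ ((1:ℝ)/2) := by
    intro i hi
    have hq0 : 0 < p i + 1 := by linarith [hp i hi]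
    have h1q : 0 < 1/(p i + 1) := by positivity
    have hWcont : ∀ k, Continuous (W k) := fun k =>
      (hcu.neg.sub continuous_const).max continuous_const
    have hwq_cont : Continuous (fun x => (w x) ^ (p i + 1)) :=
      hcw.rpow_const (fun x => Or.inr hq0.le)
    have hwq_int : Integrable (fun x => (w x) ^ (p i + 1)) :=
      testIntegrable hΩb hwq_cont
        (fun x hx => by rw [hw0 x hx]; exact Real.zero_rpow hq0.ne')
    have htend : Filter.Tendsto (fun k => ∫ x, |W k x| ^ (p i + 1)) Filter.atTop
        (nhds (∫ x, (w x) ^ (p i + 1))) := by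
      refine MeasureTheory.tendsto_integral_of_dominated_convergence
        (fun x => (w x) ^ (p i + 1))
        (fun k => ((hWcont k).abs.rpow_const (fun x => Or.inr hq0.le)).aestronglyMeasurable)
        hwq_int ?_ ?_
      · intro k
        refine Filter.Eventually.of_forall fun x => ?_
        rw [Real.norm_eq_abs, abs_of_nonneg (Real.rpow_nonneg (abs_nonneg _) _),
          abs_of_nonneg (hW_nonneg k x)]
        exact Real.rpow_le_rpow (hW_nonneg k x) (hW_le_w k x) hq0.le
      · refine Filter.Eventually.of_forall fun x => ?_
        have h1 : Filter.Tendsto (fun k => (W k x) ^ (p i + 1)) Filter.atTop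
            (nhds ((w x) ^ (p i + 1))) :=
          ((Real.continuousAt_rpow_const _ _ (Or.inr hq0.le)).tendsto).comp (hW_tendsto x)
        refine h1.congr fun k => ?_
        rw [abs_of_nonneg (hW_nonneg k x)]
    have hk : ∀ k, (∫ x, |W k x| ^ (p i + 1)) ^ (1/(p i + 1)) ≤ C i * Ebig ^ ((1:ℝ)/2) := by
      intro k
      refine (hSobolev i hi (W k) (hWtest k)).trans ?_
      rw [hWgrad k]
      refine mul_le_mul_of_nonneg_left ?_ (hC i hi).le
      exact Real.rpow_le_rpow (hF0 k) (hFE k) (by norm_num)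
    have htend2 : Filter.Tendsto (fun k => (∫ x, |W k x| ^ (p i + 1)) ^ (1/(p i + 1)))
        Filter.atTop (nhds ((∫ x, (w x) ^ (p i + 1)) ^ (1/(p i + 1)))) :=
      ((Real.continuousAt_rpow_const _ _ (Or.inr h1q.le)).tendsto).comp htend
    exact le_of_tendsto htend2 (Filter.Eventually.of_forall hk)
  -- Minkowski / error bound
  have hMink : ∀ i ∈ Finset.Icc 1 n,
      (∫ x, (w x) ^ (p i + 1)) ^ (1 / (p i + 1)) ≤
        (∫ x, (max (-uhat x) 0) ^ (p i + 1)) ^ (1 / (p i + 1)) + C i * ρ := by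
    intro i hi
    have hq0 : 0 < p i + 1 := by linarith [hp i hi]
    have hq1 : 1 ≤ p i + 1 := by linarith [hp i hi]
    set q : ℝ := p i + 1 with hq_def
    set g : EuclideanSpace ℝ (Fin N) → ℝ := fun x => max (-uhat x) 0 with hg_def
    set d : EuclideanSpace ℝ (Fin N) → ℝ := fun x => w x - g x with hd_def
    have hg_nonneg : ∀ x, 0 ≤ g x := fun x => le_max_right _ _
    have hcg : Continuous g := (hKh.continuous.neg).max continuous_const
    have hcd : Continuous d := hcw.sub hcg
    have hg0 : ∀ x ∉ Ω, g x = 0 := fun x hx => by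
      simp [hg_def, huhat0 x hx]
    have hd0 : ∀ x ∉ Ω, d x = 0 := fun x hx => by
      simp [hd_def, hw0 x hx, hg0 x hx]
    -- integrability of powers
    have hwq_int : Integrable (fun x => (w x) ^ q) :=
      testIntegrable hΩb (hcw.rpow_const (fun x => Or.inr hq0.le))
        (fun x hx => by rw [hw0 x hx]; exact Real.zero_rpow hq0.ne')
    have hgq_int : Integrable (fun x => (g x) ^ q) :=
      testIntegrable hΩb (hcg.rpow_const (fun x => Or.inr hq0.le))
        (fun x hx => by rw [hg0 x hx]; exact Real.zero_rpow hq0.ne')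
    have hdq_int : Integrable (fun x => |d x| ^ q) :=
      testIntegrable hΩb (hcd.abs.rpow_const (fun x => Or.inr hq0.le))
        (fun x hx => by rw [hd0 x hx]; simpa using Real.zero_rpow hq0.ne')
    have hA0 : 0 ≤ ∫ x, (w x) ^ q :=
      integral_nonneg fun x => Real.rpow_nonneg (hw_nonneg x) _
    have hB0 : 0 ≤ ∫ x, (g x) ^ q :=
      integral_nonneg fun x => Real.rpow_nonneg (hg_nonneg x) _
    have hD0 : 0 ≤ ∫ x, |d x| ^ q :=
      integral_nonneg fun x => Real.rpow_nonneg (abs_nonneg _) _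
    -- Minkowski inequality via lintegrals
    have hofA : ENNReal.ofReal (∫ x, (w x) ^ q)
        = ∫⁻ x, (ENNReal.ofReal (w x)) ^ q := by
      rw [MeasureTheory.ofReal_integral_eq_lintegral_ofReal hwq_int
        (Filter.Eventually.of_forall fun x => Real.rpow_nonneg (hw_nonneg x) _)]
      exact lintegral_congr fun x =>
        (ENNReal.ofReal_rpow_of_nonneg (hw_nonneg x) hq0.le).symm
    have hofB : ENNReal.ofReal (∫ x, (g x) ^ q)
        = ∫⁻ x, (ENNReal.ofReal (g x)) ^ q := by
      rw [MeasureTheory.ofReal_integral_eq_lintegral_ofReal hgq_int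
        (Filter.Eventually.of_forall fun x => Real.rpow_nonneg (hg_nonneg x) _)]
      exact lintegral_congr fun x =>
        (ENNReal.ofReal_rpow_of_nonneg (hg_nonneg x) hq0.le).symm
    have hofD : ENNReal.ofReal (∫ x, |d x| ^ q)
        = ∫⁻ x, (ENNReal.ofReal |d x|) ^ q := by
      rw [MeasureTheory.ofReal_integral_eq_lintegral_ofReal hdq_int
        (Filter.Eventually.of_forall fun x => Real.rpow_nonneg (abs_nonneg _) _)]
      exact lintegral_congr fun x =>
        (ENNReal.ofReal_rpow_of_nonneg (abs_nonneg _) hq0.le).symm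
    have hMink0 : (∫ x, (w x) ^ q) ^ (1/q) ≤
        (∫ x, (g x) ^ q) ^ (1/q) + (∫ x, |d x| ^ q) ^ (1/q) := by
      have hle : ENNReal.ofReal (∫ x, (w x) ^ q) ^ (1/q) ≤
          ENNReal.ofReal (∫ x, (g x) ^ q) ^ (1/q)
          + ENNReal.ofReal (∫ x, |d x| ^ q) ^ (1/q) := by
        rw [hofA, hofB, hofD]
        calc (∫⁻ x, (ENNReal.ofReal (w x)) ^ q) ^ (1/q)
            ≤ (∫⁻ x, (((fun x => ENNReal.ofReal (g x)) +
                (fun x => ENNReal.ofReal |d x|)) x) ^ q) ^ (1/q) := by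
              refine ENNReal.rpow_le_rpow ?_ (by positivity)
              refine lintegral_mono fun x => ?_
              refine ENNReal.rpow_le_rpow ?_ hq0.le
              have hwd : w x ≤ g x + |d x| := by
                have : d x = w x - g x := rfl
                cases abs_cases (d x) with
                | inl h => rw [h.1]; linarith [this]
                | inr h => rw [h.1]; nlinarith [this, hw_nonneg x, hg_nonneg x]
              calc ENNReal.ofReal (w x) ≤ ENNReal.ofReal (g x + |d x|) :=
                    ENNReal.ofReal_le_ofReal hwd
                _ = ENNReal.ofReal (g x) + ENNReal.ofReal |d x| :=
                    ENNReal.ofReal_add (hg_nonneg x) (abs_nonneg _)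
          _ ≤ _ := ENNReal.lintegral_Lp_add_le
              (hcg.measurable.ennreal_ofReal.aemeasurable)
              (hcd.abs.measurable.ennreal_ofReal.aemeasurable) hq1
      rw [ENNReal.ofReal_rpow_of_nonneg hA0 (by positivity),
        ENNReal.ofReal_rpow_of_nonneg hB0 (by positivity),
        ENNReal.ofReal_rpow_of_nonneg hD0 (by positivity),
        ← ENNReal.ofReal_add (Real.rpow_nonneg hB0 _) (Real.rpow_nonneg hD0 _)] at hle
      exact (ENNReal.ofReal_le_ofReal_iff
        (by positivity)).1 hle
    -- bound the error term via Sobolev on u - uhat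
    have htest : IsLipTest Ω (u - uhat) := by
      refine ⟨⟨Ku + Kh, hKu.sub hKh⟩, fun x hx => ?_⟩
      simp [Pi.sub_apply, hu0 x hx, huhat0 x hx]
    have hSub := hSobolev i hi (u - uhat) htest
    have herr2 : (∫ x, ‖fderiv ℝ (u - uhat) x‖ ^ 2) ^ ((1:ℝ)/2) ≤ ρ := by
      have h1 : (∫ x, ‖fderiv ℝ (u - uhat) x‖ ^ 2) ^ ((1:ℝ)/2) ≤
          (ρ ^ 2) ^ ((1:ℝ)/2) :=
        Real.rpow_le_rpow (integral_nonneg fun x => by positivity) herr (by norm_num)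
      refine h1.trans_eq ?_
      rw [← Real.rpow_natCast ρ 2, ← Real.rpow_mul hρ]
      norm_num
    have hdq_le : (∫ x, |d x| ^ q) ^ (1/q) ≤ C i * ρ := by
      have hpt : ∀ x, |d x| ^ q ≤ |(u - uhat) x| ^ q := by
        intro x
        refine Real.rpow_le_rpow (abs_nonneg _) ?_ hq0.le
        have : |max (-u x) 0 - max (-uhat x) 0| ≤ |(-u x) - (-uhat x)| :=
          abs_max_sub_max_le_abs _ _ _
        calc |d x| = |max (-u x) 0 - max (-uhat x) 0| := rfl
          _ ≤ |(-u x) - (-uhat x)| := this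
          _ = |(u - uhat) x| := by rw [Pi.sub_apply]; rw [abs_sub_comm]; ring_nf
      have huu_int : Integrable (fun x => |(u - uhat) x| ^ q) :=
        testIntegrable hΩb
          (((hKu.continuous.sub hKh.continuous).abs).rpow_const (fun x => Or.inr hq0.le))
          (fun x hx => by
            simp only [Pi.sub_apply, hu0 x hx, huhat0 x hx, sub_zero, abs_zero]
            exact Real.zero_rpow hq0.ne')
      have h2 : (∫ x, |d x| ^ q) ≤ ∫ x, |(u - uhat) x| ^ q :=
        integral_mono hdq_int huu_int hpt
      calc (∫ x, |d x| ^ q) ^ (1/q) ≤ (∫ x, |(u - uhat) x| ^ q) ^ (1/q) :=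
            Real.rpow_le_rpow hD0 h2 (by positivity)
        _ ≤ C i * (∫ x, ‖fderiv ℝ (u - uhat) x‖ ^ 2) ^ ((1:ℝ)/2) := hSub
        _ ≤ C i * ρ := mul_le_mul_of_nonneg_left herr2 (hC i hi).le
    exact hMink0.trans (add_le_add le_rfl hdq_le)
  -- final algebra
  have hEzero : Ebig = 0 := by
    have hw2_int : Integrable (fun x => (w x) ^ 2) :=
      testIntegrable hΩb (hcw.pow 2) (fun x hx => by rw [hw0 x hx]; ring)
    have hwq_int : ∀ i ∈ Finset.Icc 1 n, Integrable (fun x => (w x) ^ (p i + 1)) := by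
      intro i hi
      have hq0 : (0:ℝ) < p i + 1 := by linarith [hp i hi]
      exact testIntegrable hΩb (hcw.rpow_const fun x => Or.inr hq0.le)
        (fun x hx => by rw [hw0 x hx]; exact Real.zero_rpow hq0.ne')
    have hsum_int : Integrable
        (fun x => ∑ i ∈ Finset.Icc 1 n, a i * (w x) ^ (p i + 1)) :=
      integrable_finset_sum _ fun i hi => (hwq_int i hi).const_mul _
    have hlhs_int : Integrable (fun x => -(f (u x) * w x)) :=
      (testIntegrable hΩb ((hf.comp hcu).mul hcw)
        (fun x hx => by rw [Pi.mul_apply, hw0 x hx, mul_zero])).neg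
    have hrhs_int : Integrable
        (fun x => lam * (w x) ^ 2 + ∑ i ∈ Finset.Icc 1 n, a i * (w x) ^ (p i + 1)) :=
      (hw2_int.const_mul lam).add hsum_int
    have hpt : ∀ x, -(f (u x) * w x) ≤
        lam * (w x) ^ 2 + ∑ i ∈ Finset.Icc 1 n, a i * (w x) ^ (p i + 1) := by
      intro x
      rcases eq_or_lt_of_le (hw_nonneg x) with h0 | hpos
      · have hz : ∀ i ∈ Finset.Icc 1 n, a i * (w x) ^ (p i + 1) = 0 := by
          intro i hi
          rw [← h0, Real.zero_rpow (by linarith [hp i hi] : p i + 1 ≠ 0), mul_zero]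
        rw [Finset.sum_congr rfl hz, Finset.sum_const_zero, ← h0]
        simp
      · have hwx : w x = -u x := by
          rcases max_cases (-u x) (0:ℝ) with ⟨h1, _⟩ | ⟨h1, _⟩
          · exact h1
          · exfalso
            have h2 : w x = 0 := h1
            rw [h2] at hpos; exact lt_irrefl _ hpos
        have hux : u x = -(w x) := by rw [hwx]; ring
        have hb := hfb (w x) (hw_nonneg x)
        have hkey : -(f (u x) * w x) = (-f (-(w x))) * w x := by rw [hux]; ring
        rw [hkey]
        calc (-f (-(w x))) * w x
            ≤ (lam * w x + ∑ i ∈ Finset.Icc 1 n, a i * (w x) ^ (p i)) * w x :=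
              mul_le_mul_of_nonneg_right hb (hw_nonneg x)
          _ = lam * (w x) ^ 2 + ∑ i ∈ Finset.Icc 1 n, (a i * (w x) ^ (p i)) * w x := by
              rw [add_mul, Finset.sum_mul, sq]
              ring_nf
          _ = lam * (w x) ^ 2 + ∑ i ∈ Finset.Icc 1 n, a i * (w x) ^ (p i + 1) := by
              congr 1
              refine Finset.sum_congr rfl fun i hi => ?_
              rw [Real.rpow_add_one hpos.ne', mul_assoc]
    have hkey : Ebig ≤ lam * (∫ x, (w x) ^ 2)
        + ∑ i ∈ Finset.Icc 1 n, a i * ∫ x, (w x) ^ (p i + 1) := by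
      rw [hweak_lim]
      refine (integral_mono hlhs_int hrhs_int hpt).trans_eq ?_
      rw [integral_add (hw2_int.const_mul lam) hsum_int,
        integral_const_mul lam _,
        integral_finset_sum _ (fun i hi => (hwq_int i hi).const_mul _)]
      congr 1
      exact Finset.sum_congr rfl fun i hi => integral_const_mul _ _
    have hterm : ∀ i ∈ Finset.Icc 1 n, ∫ x, (w x) ^ (p i + 1) ≤
        ((∫ x, (max (-uhat x) 0) ^ (p i + 1)) ^ (1 / (p i + 1)) + C i * ρ) ^ (p i - 1)
          * (C i ^ 2 * Ebig) := by
      intro i hi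
      have hq0 : (0:ℝ) < p i + 1 := by linarith [hp i hi]
      have hI0 : 0 ≤ ∫ x, (w x) ^ (p i + 1) :=
        integral_nonneg fun x => Real.rpow_nonneg (hw_nonneg x) _
      set I : ℝ := ∫ x, (w x) ^ (p i + 1) with hI_def
      set s : ℝ := I ^ (1/(p i + 1)) with hs_def
      have hs0 : 0 ≤ s := Real.rpow_nonneg hI0 _
      have hIs : s ^ (p i + 1) = I := by
        rw [hs_def, ← Real.rpow_mul hI0, one_div_mul_cancel hq0.ne', Real.rpow_one]
      have hM := hMink i hi
      have hS := hSob_lim i hi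
      have hM0 : 0 ≤ (∫ x, (max (-uhat x) 0) ^ (p i + 1)) ^ (1 / (p i + 1)) + C i * ρ :=
        le_trans hs0 hM
      have hCE0 : 0 ≤ C i * Ebig ^ ((1:ℝ)/2) :=
        mul_nonneg (hC i hi).le (Real.rpow_nonneg hE0 _)
      calc I = s ^ ((p i - 1) + 2) := by rw [show (p i - 1) + 2 = p i + 1 by ring, hIs]
        _ = s ^ (p i - 1) * s ^ (2:ℝ) :=
            Real.rpow_add' hs0 (by rw [show (p i - 1) + 2 = p i + 1 by ring]; exact hq0.ne')
        _ ≤ ((∫ x, (max (-uhat x) 0) ^ (p i + 1)) ^ (1 / (p i + 1)) + C i * ρ) ^ (p i - 1)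
              * (C i * Ebig ^ ((1:ℝ)/2)) ^ (2:ℝ) :=
            mul_le_mul (Real.rpow_le_rpow hs0 hM (by linarith [hp i hi]))
              (Real.rpow_le_rpow hs0 hS (by norm_num))
              (Real.rpow_nonneg hs0 _) (Real.rpow_nonneg hM0 _)
        _ = ((∫ x, (max (-uhat x) 0) ^ (p i + 1)) ^ (1 / (p i + 1)) + C i * ρ) ^ (p i - 1)
              * (C i ^ 2 * Ebig) := by
            congr 1
            rw [Real.mul_rpow (hC i hi).le (Real.rpow_nonneg hE0 _),
              ← Real.rpow_mul hE0, ← Real.rpow_natCast (C i) 2]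
            norm_num
    have hsum2 : ∑ i ∈ Finset.Icc 1 n, a i * ∫ x, (w x) ^ (p i + 1) ≤
        (∑ i ∈ Finset.Icc 1 n, a i * C i ^ 2 *
          ((∫ x, (max (-uhat x) 0) ^ (p i + 1)) ^ (1 / (p i + 1)) + C i * ρ) ^ (p i - 1))
          * Ebig := by
      rw [Finset.sum_mul]
      refine Finset.sum_le_sum fun i hi => ?_
      calc a i * ∫ x, (w x) ^ (p i + 1)
          ≤ a i * (((∫ x, (max (-uhat x) 0) ^ (p i + 1)) ^ (1 / (p i + 1)) + C i * ρ)
              ^ (p i - 1) * (C i ^ 2 * Ebig)) :=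
            mul_le_mul_of_nonneg_left (hterm i hi) (ha i hi)
        _ = a i * C i ^ 2 *
            ((∫ x, (max (-uhat x) 0) ^ (p i + 1)) ^ (1 / (p i + 1)) + C i * ρ)
              ^ (p i - 1) * Ebig := by ring
    have hP : lam * (∫ x, (w x) ^ 2) ≤ lam / lam₁ * Ebig := by
      have h1 : (∫ x, (w x) ^ 2) ≤ Ebig / lam₁ := by
        rw [le_div_iff₀ hlam₁]; linarith [hPoin_lim]
      calc lam * (∫ x, (w x) ^ 2) ≤ lam * (Ebig / lam₁) :=
            mul_le_mul_of_nonneg_left h1 hlam0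
        _ = lam / lam₁ * Ebig := by ring
    set S : ℝ := ∑ i ∈ Finset.Icc 1 n, a i * C i ^ 2 *
        ((∫ x, (max (-uhat x) 0) ^ (p i + 1)) ^ (1 / (p i + 1)) + C i * ρ) ^ (p i - 1)
      with hS_def
    have hfinal : Ebig ≤ (lam / lam₁ + S) * Ebig := by
      have := hkey.trans (add_le_add hP hsum2)
      calc Ebig ≤ lam / lam₁ * Ebig + S * Ebig := this
        _ = (lam / lam₁ + S) * Ebig := by ring
    have hc1 : lam / lam₁ + S < 1 := by
      have h := hcond
      have hdiv : 0 ≤ lam / lam₁ := div_nonneg hlam0 hlam₁.le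
      have hlt : lam / lam₁ < 1 := (div_lt_one hlam₁).2 hlam
      linarith
    refine le_antisymm ?_ hE0
    nlinarith [hfinal, hc1, hE0]
  -- conclude w ≡ 0
  have hw2zero : ∫ x, (w x) ^ 2 = 0 := by
    have h1 : lam₁ * ∫ x, (w x) ^ 2 ≤ 0 := hEzero ▸ hPoin_lim
    have h2 : 0 ≤ ∫ x, (w x) ^ 2 := integral_nonneg fun x => by positivity
    nlinarith
  have hwzero : ∀ x, w x = 0 := by
    have hint : Integrable (fun x => (w x) ^ 2) :=
      testIntegrable hΩb (hcw.pow 2) (fun x hx => by rw [hw0 x hx]; ring)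
    have hae0 : (fun x => (w x) ^ 2) =ᶠ[ae volume] 0 :=
      (integral_eq_zero_iff_of_nonneg (fun x => by positivity) hint).1 hw2zero
    have hopen : IsOpen {x : EuclideanSpace ℝ (Fin N) | w x ≠ 0} :=
      isOpen_ne_fun hcw continuous_const
    have hnull : volume {x : EuclideanSpace ℝ (Fin N) | w x ≠ 0} = 0 := by
      have : {x : EuclideanSpace ℝ (Fin N) | w x ≠ 0} ⊆
          {x | ¬ ((fun x => (w x) ^ 2) x = (0 : EuclideanSpace ℝ (Fin N) → ℝ) x)} := by
        intro x hx; simp only [Set.mem_setOf_eq, Pi.zero_apply, pow_eq_zero_iff] at *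
        exact fun h => hx (by simpa using h)
      exact measure_mono_null this hae0
    have := hopen.eq_empty_of_measure_zero hnull
    intro x
    by_contra hx
    exact absurd (Set.eq_empty_iff_forall_notMem.1 this x) (by simpa using hx)
  intro x
  have := hwzero x
  simp only [hw_def, max_eq_right_iff] at this
  linarith [le_max_left (-u x) 0, this]
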